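/- arXiv:2207.05852 — 8 statements merged into one kernel-verified Lean document; each statement's English description precedes it below -/
import Mathlib

section
/- Proposition 1(i): For every stage h ∈ {1,...,H}, state s ∈ S and action a ∈ A such that there exists at least one policy π ∈ Π with p^π_h(s,a) > 0, the conditional return gap dominates the value gap: Δtilde_h(s,a) ≥ Δ_h(s,a). -/
/-- A finite episodic MDP with horizon `H`, initial state `s1`,
transition kernel `p h s a s'` and mean rewards `r h s a` (for stages `h ∈ {1,…,H}`). -/
structure MDP (S A : Type) [Fintype S] [Fintype A] where
  H : ℕ
  H_pos : 1 ≤ H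
  s1 : S
  p : ℕ → S → A → S → ℝ
  r : ℕ → S → A → ℝ
  p_nonneg : ∀ h s a s', 1 ≤ h → h ≤ H → 0 ≤ p h s a s'
  p_sum_one : ∀ h s a, 1 ≤ h → h ≤ H → ∑ s' : S, p h s a s' = 1
  r_nonneg : ∀ h s a, 1 ≤ h → h ≤ H → 0 ≤ r h s a
  r_le_one : ∀ h s a, 1 ≤ h → h ≤ H → r h s a ≤ 1

namespace MDP

variable {S A : Type} [Fintype S] [Fintype A] [DecidableEq S] [DecidableEq A]
variable (M : MDP S A)

/-- Fuel-indexed value of policy `π`: `polValAux M π k s = V^π_{H+1-k}(s)`. -/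
noncomputable def polValAux (π : ℕ → S → A) : ℕ → S → ℝ
  | 0, _ => 0
  | k + 1, s =>
      M.r (M.H - k) s (π (M.H - k) s) +
        ∑ s' : S, M.p (M.H - k) s (π (M.H - k) s) s' * polValAux π k s'

/-- `V^π_h(s)`, for `1 ≤ h ≤ H + 1`. -/
noncomputable def polVal (π : ℕ → S → A) (h : ℕ) (s : S) : ℝ :=
  M.polValAux π (M.H + 1 - h) s

/-- `Q^π_h(s,a)`. -/
noncomputable def polQ (π : ℕ → S → A) (h : ℕ) (s : S) (a : A) : ℝ :=
  M.r h s a + ∑ s' : S, M.p h s a s' * M.polVal π (h + 1) s'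

/-- Fuel-indexed optimal value: `optValAux M k s = V*_{H+1-k}(s)`. -/
noncomputable def optValAux : ℕ → S → ℝ
  | 0, _ => 0
  | k + 1, s =>
      ⨆ a : A, (M.r (M.H - k) s a + ∑ s' : S, M.p (M.H - k) s a s' * optValAux k s')

/-- `V*_h(s)`, for `1 ≤ h ≤ H + 1`. -/
noncomputable def optVal (h : ℕ) (s : S) : ℝ := M.optValAux (M.H + 1 - h) s

/-- `Q*_h(s,a)`. -/
noncomputable def optQ (h : ℕ) (s : S) (a : A) : ℝ :=
  M.r h s a + ∑ s' : S, M.p h s a s' * M.optVal (h + 1) s'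

/-- Visitation probability `p^π_h(s)`, for `1 ≤ h ≤ H`. -/
noncomputable def visit (π : ℕ → S → A) : ℕ → S → ℝ
  | 0, _ => 0
  | 1, s => if s = M.s1 then 1 else 0
  | h + 2, s' => ∑ s : S, visit π (h + 1) s * M.p (h + 1) s (π (h + 1) s) s'

/-- State-action visitation probability `p^π_h(s,a)`. -/
noncomputable def visitSA (π : ℕ → S → A) (h : ℕ) (s : S) (a : A) : ℝ :=
  if π h s = a then M.visit π h s else 0

/-- Fuel-indexed conditional visitation: `cvisitAux M π s h k s' = p^π_{h+k}(s' | s, h)`. -/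
noncomputable def cvisitAux (π : ℕ → S → A) (s : S) (h : ℕ) : ℕ → S → ℝ
  | 0, s' => if s' = s then 1 else 0
  | k + 1, s' =>
      ∑ s'' : S, cvisitAux π s h k s'' * M.p (h + k) s'' (π (h + k) s'') s'

/-- Conditional visitation probability `p^π_ℓ(s' | s, h)`, for `h ≤ ℓ`. -/
noncomputable def cvisit (π : ℕ → S → A) (s : S) (h ℓ : ℕ) (s' : S) : ℝ :=
  M.cvisitAux π s h (ℓ - h) s'

/-- Value gap `Δ_h(s,a) = V*_h(s) - Q*_h(s,a)`. -/
noncomputable def valGap (h : ℕ) (s : S) (a : A) : ℝ := M.optVal h s - M.optQ h s a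

/-- The worst conditional value loss of policy `π`:
`max_{ℓ ∈ [H]} max_{s' : p^π_ℓ(s') > 0} (V*_ℓ(s') - V^π_ℓ(s'))`. -/
noncomputable def condRetGap (π : ℕ → S → A) : ℝ :=
  sSup {x : ℝ | ∃ ℓ, 1 ≤ ℓ ∧ ℓ ≤ M.H ∧ ∃ s' : S,
    M.visit π ℓ s' > 0 ∧ x = M.optVal ℓ s' - M.polVal π ℓ s'}

/-- Conditional return gap `Δtilde_h(s,a)`. -/
noncomputable def tildeGap (h : ℕ) (s : S) (a : A) : ℝ :=
  sInf {x : ℝ | ∃ π : ℕ → S → A, M.visitSA π h s a > 0 ∧ x = M.condRetGap π}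

/-- Return gap `Δbar_h(s,a) = V*_1(s1) - max_{π : p^π_h(s,a) > 0} V^π_1(s1)`. -/
noncomputable def barGap (h : ℕ) (s : S) (a : A) : ℝ :=
  M.optVal 1 M.s1 -
    sSup {x : ℝ | ∃ π : ℕ → S → A, M.visitSA π h s a > 0 ∧ x = M.polVal π 1 M.s1}

end MDP


section Helpers

variable {S A : Type} [Fintype S] [Nonempty S] [Fintype A] [Nonempty A]
  [DecidableEq S] [DecidableEq A]

lemma MDP.polValAux_le_optValAux (M : MDP S A) (π : ℕ → S → A) :
    ∀ k, k ≤ M.H → ∀ s, M.polValAux π k s ≤ M.optValAux k s := by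
  intro k
  induction k with
  | zero => intro _ s; simp [MDP.polValAux, MDP.optValAux]
  | succ k ih =>
    intro hk s
    have hk' : k ≤ M.H := Nat.le_of_succ_le hk
    have h1 : 1 ≤ M.H - k := by omega
    have h2 : M.H - k ≤ M.H := Nat.sub_le _ _
    have hsum : ∑ s' : S, M.p (M.H-k) s (π (M.H-k) s) s' * M.polValAux π k s'
        ≤ ∑ s' : S, M.p (M.H-k) s (π (M.H-k) s) s' * M.optValAux k s' := by
      apply Finset.sum_le_sum
      intro s' _
      exact mul_le_mul_of_nonneg_left (ih hk' s') (M.p_nonneg _ _ _ _ h1 h2)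
    calc M.polValAux π (k+1) s
        = M.r (M.H-k) s (π (M.H-k) s)
            + ∑ s' : S, M.p (M.H-k) s (π (M.H-k) s) s' * M.polValAux π k s' := rfl
      _ ≤ M.r (M.H-k) s (π (M.H-k) s)
            + ∑ s' : S, M.p (M.H-k) s (π (M.H-k) s) s' * M.optValAux k s' := by linarith
      _ ≤ ⨆ a : A, (M.r (M.H-k) s a
            + ∑ s' : S, M.p (M.H-k) s a s' * M.optValAux k s') :=
          le_ciSup (f := fun a : A => M.r (M.H-k) s a
            + ∑ s' : S, M.p (M.H-k) s a s' * M.optValAux k s')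
            (Set.Finite.bddAbove (Set.finite_range _)) (π (M.H-k) s)

lemma MDP.polVal_le_optVal (M : MDP S A) (π : ℕ → S → A) (h : ℕ) (hh : 1 ≤ h) (s : S) :
    M.polVal π h s ≤ M.optVal h s := by
  exact M.polValAux_le_optValAux π (M.H + 1 - h) (by omega) s

lemma MDP.polVal_eq (M : MDP S A) (π : ℕ → S → A) (h : ℕ) (hh1 : 1 ≤ h) (hhH : h ≤ M.H)
    (s : S) :
    M.polVal π h s = M.r h s (π h s)
      + ∑ s' : S, M.p h s (π h s) s' * M.polVal π (h+1) s' := by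
  have e1 : M.H + 1 - h = (M.H - h) + 1 := by omega
  have e2 : M.H - (M.H - h) = h := by omega
  have e3 : M.H + 1 - (h+1) = M.H - h := by omega
  unfold MDP.polVal
  rw [e1, e3]
  show M.r (M.H - (M.H - h)) s _ + _ = _
  rw [e2]

lemma MDP.condRetGap_bddAbove (M : MDP S A) (π : ℕ → S → A) :
    BddAbove {x : ℝ | ∃ ℓ, 1 ≤ ℓ ∧ ℓ ≤ M.H ∧ ∃ s' : S,
      M.visit π ℓ s' > 0 ∧ x = M.optVal ℓ s' - M.polVal π ℓ s'} := by
  apply Set.Finite.bddAbove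
  apply Set.Finite.subset (Set.Finite.image
    (f := fun q : ℕ × S => M.optVal q.1 q.2 - M.polVal π q.1 q.2)
    ((Set.finite_Icc 1 M.H).prod (Set.finite_univ)))
  rintro x ⟨ℓ, h1, h2, s', _, rfl⟩
  exact ⟨(ℓ, s'), ⟨⟨h1, h2⟩, trivial⟩, rfl⟩

end Helpers

/-- Proposition 1(i): the conditional return gap dominates the value gap. -/
theorem tildeGap_ge_valGap {S A : Type} [Fintype S] [Nonempty S] [Fintype A] [Nonempty A]
    [DecidableEq S] [DecidableEq A] (M : MDP S A)
    (h : ℕ) (hh1 : 1 ≤ h) (hhH : h ≤ M.H) (s : S) (a : A)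
    (hex : ∃ π : ℕ → S → A, M.visitSA π h s a > 0) :
    M.tildeGap h s a ≥ M.valGap h s a := by
  obtain ⟨π0, hπ0⟩ := hex
  rw [ge_iff_le, MDP.tildeGap]
  refine le_csInf ⟨M.condRetGap π0, ⟨π0, hπ0, rfl⟩⟩ ?_
  rintro x ⟨π, hπ, rfl⟩
  have hπa : π h s = a := by
    by_contra hne
    simp [MDP.visitSA, hne] at hπ
  have hvis : M.visit π h s > 0 := by
    simpa [MDP.visitSA, hπa] using hπ
  have hmem : M.optVal h s - M.polVal π h s ∈ {x : ℝ | ∃ ℓ, 1 ≤ ℓ ∧ ℓ ≤ M.H ∧ ∃ s' : S,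
      M.visit π ℓ s' > 0 ∧ x = M.optVal ℓ s' - M.polVal π ℓ s'} :=
    ⟨h, hh1, hhH, s, hvis, rfl⟩
  have h1 : M.optVal h s - M.polVal π h s ≤ M.condRetGap π :=
    le_csSup (M.condRetGap_bddAbove π) hmem
  have h2 : M.polVal π h s ≤ M.optQ h s a := by
    rw [M.polVal_eq π h hh1 hhH s, hπa]
    unfold MDP.optQ
    have : ∑ s' : S, M.p h s a s' * M.polVal π (h+1) s'
        ≤ ∑ s' : S, M.p h s a s' * M.optVal (h+1) s' := by
      apply Finset.sum_le_sum
      intro s' _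
      exact mul_le_mul_of_nonneg_left (M.polVal_le_optVal π (h+1) (by omega) s')
        (M.p_nonneg _ _ _ _ hh1 hhH)
    linarith
  unfold MDP.valGap
  linarith
end

section
/- Proposition 1(iii): If the MDP has deterministic transitions, then for every stage h ∈ {1,...,H}, state s ∈ S and action a ∈ A such that there exists at least one policy π ∈ Π with p^π_h(s,a) > 0, the conditional return gap equals the return gap: Δtilde_h(s,a) = Δbar_h(s,a). -/
namespace MDP

variable {S A : Type} [Fintype S] [Fintype A] [DecidableEq S] [DecidableEq A]
variable (M : MDP S A)

lemma polVal_succ' (π : ℕ → S → A) (ℓ : ℕ) (s : S) (h1 : 1 ≤ ℓ) (h2 : ℓ ≤ M.H) :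
    M.polVal π ℓ s =
      M.r ℓ s (π ℓ s) + ∑ s' : S, M.p ℓ s (π ℓ s) s' * M.polVal π (ℓ + 1) s' := by
  unfold polVal
  have e1 : M.H + 1 - ℓ = (M.H - ℓ) + 1 := by omega
  have e2 : M.H - (M.H - ℓ) = ℓ := by omega
  have e3 : M.H + 1 - (ℓ + 1) = M.H - ℓ := by omega
  rw [e1, e3]
  simp [polValAux, e2]

lemma optVal_succ' (ℓ : ℕ) (s : S) (h1 : 1 ≤ ℓ) (h2 : ℓ ≤ M.H) :
    M.optVal ℓ s =
      ⨆ a : A, (M.r ℓ s a + ∑ s' : S, M.p ℓ s a s' * M.optVal (ℓ + 1) s') := by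
  unfold optVal
  have e1 : M.H + 1 - ℓ = (M.H - ℓ) + 1 := by omega
  have e2 : M.H - (M.H - ℓ) = ℓ := by omega
  have e3 : M.H + 1 - (ℓ + 1) = M.H - ℓ := by omega
  rw [e1, e3]
  simp [optValAux, e2]

lemma le_optVal' [Nonempty A] (ℓ : ℕ) (s : S) (a : A) (h1 : 1 ≤ ℓ) (h2 : ℓ ≤ M.H) :
    M.r ℓ s a + ∑ s' : S, M.p ℓ s a s' * M.optVal (ℓ + 1) s' ≤ M.optVal ℓ s := by
  rw [M.optVal_succ' ℓ s h1 h2]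
  have hb : BddAbove (Set.range fun a : A =>
      M.r ℓ s a + ∑ s' : S, M.p ℓ s a s' * M.optVal (ℓ + 1) s') :=
    (Set.finite_range _).bddAbove
  exact le_ciSup hb a

lemma polValAux_le_optValAux' [Nonempty A] (π : ℕ → S → A) :
    ∀ k, k ≤ M.H → ∀ s, M.polValAux π k s ≤ M.optValAux k s := by
  intro k
  induction k with
  | zero => intro _ s; simp [polValAux, optValAux]
  | succ n ih =>
    intro hn s
    have h1 : 1 ≤ M.H - n := by omega
    have h2 : M.H - n ≤ M.H := by omega
    have step : M.r (M.H - n) s (π (M.H - n) s) +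
        ∑ s' : S, M.p (M.H - n) s (π (M.H - n) s) s' * M.polValAux π n s' ≤
        M.r (M.H - n) s (π (M.H - n) s) +
        ∑ s' : S, M.p (M.H - n) s (π (M.H - n) s) s' * M.optValAux n s' := by
      gcongr with s' _
      · exact M.p_nonneg _ _ _ _ h1 h2
      · exact ih (by omega) s'
    calc M.polValAux π (n + 1) s = _ := by simp [polValAux]
      _ ≤ M.r (M.H - n) s (π (M.H - n) s) +
          ∑ s' : S, M.p (M.H - n) s (π (M.H - n) s) s' * M.optValAux n s' := step
      _ ≤ M.optValAux (n + 1) s := by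
          rw [show M.optValAux (n + 1) s = ⨆ a : A, (M.r (M.H - n) s a +
            ∑ s' : S, M.p (M.H - n) s a s' * M.optValAux n s') from by simp [optValAux]]
          have hb : BddAbove (Set.range fun a : A => M.r (M.H - n) s a +
              ∑ s' : S, M.p (M.H - n) s a s' * M.optValAux n s') :=
            (Set.finite_range _).bddAbove
          exact le_ciSup hb (π (M.H - n) s)

lemma polVal_le_optVal1 [Nonempty A] (π : ℕ → S → A) :
    M.polVal π 1 M.s1 ≤ M.optVal 1 M.s1 := by
  unfold polVal optVal
  exact M.polValAux_le_optValAux' π (M.H + 1 - 1) (by omega) M.s1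

lemma visit_nonneg' (π : ℕ → S → A) : ∀ ℓ, ℓ ≤ M.H → ∀ s, 0 ≤ M.visit π ℓ s := by
  intro ℓ
  induction ℓ with
  | zero => intro _ s; simp [visit]
  | succ n ih =>
    intro hn s
    cases n with
    | zero => simp only [visit]; split <;> norm_num
    | succ m =>
      rw [show M.visit π (m + 1 + 1) s =
        ∑ s'' : S, M.visit π (m + 1) s'' * M.p (m + 1) s'' (π (m + 1) s'') s from by
          simp [visit]]
      apply Finset.sum_nonneg
      intro i _
      exact mul_nonneg (ih (by omega) i) (M.p_nonneg _ _ _ _ (by omega) (by omega))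

lemma p_eq_zero_of_ne' (ℓ : ℕ) (s : S) (a : A) (t : S) (h1 : 1 ≤ ℓ) (h2 : ℓ ≤ M.H)
    (ht : M.p ℓ s a t = 1) : ∀ u, u ≠ t → M.p ℓ s a u = 0 := by
  intro u hu
  have hsum := M.p_sum_one ℓ s a h1 h2
  have hsplit := Finset.add_sum_erase Finset.univ (M.p ℓ s a) (Finset.mem_univ t)
  have h0 : ∑ u' ∈ Finset.univ.erase t, M.p ℓ s a u' = 0 := by
    linarith
  exact (Finset.sum_eq_zero_iff_of_nonneg
    (fun u' _ => M.p_nonneg ℓ s a u' h1 h2)).mp h0 u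
    (Finset.mem_erase.mpr ⟨hu, Finset.mem_univ u⟩)

lemma sum_p_mul_eq' (ℓ : ℕ) (s : S) (a : A) (t : S) (h1 : 1 ≤ ℓ) (h2 : ℓ ≤ M.H)
    (ht : M.p ℓ s a t = 1) (f : S → ℝ) : ∑ u : S, M.p ℓ s a u * f u = f t := by
  rw [Finset.sum_eq_single t]
  · rw [ht, one_mul]
  · intro u _ hu
    rw [M.p_eq_zero_of_ne' ℓ s a t h1 h2 ht u hu, zero_mul]
  · intro h; exact absurd (Finset.mem_univ t) h

lemma key_ineq [Nonempty A] (hdet : ∀ h s a, 1 ≤ h → h ≤ M.H → ∃ s' : S, M.p h s a s' = 1)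
    (π : ℕ → S → A) :
    ∀ ℓ, 1 ≤ ℓ → ℓ ≤ M.H → ∀ s', 0 < M.visit π ℓ s' →
      M.optVal ℓ s' - M.polVal π ℓ s' ≤ M.optVal 1 M.s1 - M.polVal π 1 M.s1 := by
  intro ℓ h1
  induction ℓ, h1 using Nat.le_induction with
  | base =>
    intro _ s' hv
    have hs' : s' = M.s1 := by
      by_contra hc
      simp [visit, hc] at hv
    rw [hs']
  | succ n hn ih =>
    intro hnH s' hv
    obtain ⟨m, rfl⟩ : ∃ m, n = m + 1 := ⟨n - 1, by omega⟩
    rw [show M.visit π (m + 1 + 1) s' =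
      ∑ s'' : S, M.visit π (m + 1) s'' * M.p (m + 1) s'' (π (m + 1) s'') s' from by
        simp [visit]] at hv
    obtain ⟨s'', -, hpos⟩ :
        ∃ s'' ∈ Finset.univ, 0 < M.visit π (m + 1) s'' * M.p (m + 1) s'' (π (m + 1) s'') s' := by
      by_contra hc
      push_neg at hc
      exact absurd (Finset.sum_nonpos hc) (not_le.mpr hv)
    have hm1 : 1 ≤ m + 1 := by omega
    have hmH : m + 1 ≤ M.H := by omega
    have hvpos : 0 < M.visit π (m + 1) s'' := by
      rcases mul_pos_iff.mp hpos with ⟨h, _⟩ | ⟨h, _⟩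
      · exact h
      · exact absurd (M.visit_nonneg' π (m + 1) hmH s'') (not_le.mpr h)
    have hppos : 0 < M.p (m + 1) s'' (π (m + 1) s'') s' := by
      rcases mul_pos_iff.mp hpos with ⟨_, h⟩ | ⟨_, h⟩
      · exact h
      · exact absurd (M.p_nonneg (m + 1) s'' (π (m + 1) s'') s' hm1 hmH) (not_le.mpr h)
    obtain ⟨t, ht⟩ := hdet (m + 1) s'' (π (m + 1) s'') hm1 hmH
    have hst : s' = t := by
      by_contra hc
      rw [M.p_eq_zero_of_ne' (m + 1) s'' (π (m + 1) s'') t hm1 hmH ht s' hc] at hppos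
      exact lt_irrefl 0 hppos
    subst hst
    have hpol : M.polVal π (m + 1) s'' =
        M.r (m + 1) s'' (π (m + 1) s'') + M.polVal π (m + 1 + 1) s' := by
      rw [M.polVal_succ' π (m + 1) s'' hm1 hmH,
        M.sum_p_mul_eq' (m + 1) s'' (π (m + 1) s'') s' hm1 hmH ht]
    have hopt : M.r (m + 1) s'' (π (m + 1) s'') + M.optVal (m + 1 + 1) s' ≤
        M.optVal (m + 1) s'' := by
      have := M.le_optVal' (m + 1) s'' (π (m + 1) s'') hm1 hmH
      rwa [M.sum_p_mul_eq' (m + 1) s'' (π (m + 1) s'') s' hm1 hmH ht] at this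
    have hih := ih hmH s'' hvpos
    linarith

lemma condRetGap_eq' [Nonempty A] (hdet : ∀ h s a, 1 ≤ h → h ≤ M.H → ∃ s' : S, M.p h s a s' = 1)
    (π : ℕ → S → A) :
    M.condRetGap π = M.optVal 1 M.s1 - M.polVal π 1 M.s1 := by
  have hmem : (M.optVal 1 M.s1 - M.polVal π 1 M.s1) ∈
      {x : ℝ | ∃ ℓ, 1 ≤ ℓ ∧ ℓ ≤ M.H ∧ ∃ s' : S,
        M.visit π ℓ s' > 0 ∧ x = M.optVal ℓ s' - M.polVal π ℓ s'} :=
    ⟨1, le_refl 1, M.H_pos, M.s1, by simp [visit], rfl⟩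
  have hub : ∀ x ∈ {x : ℝ | ∃ ℓ, 1 ≤ ℓ ∧ ℓ ≤ M.H ∧ ∃ s' : S,
      M.visit π ℓ s' > 0 ∧ x = M.optVal ℓ s' - M.polVal π ℓ s'},
      x ≤ M.optVal 1 M.s1 - M.polVal π 1 M.s1 := by
    rintro x ⟨ℓ, hℓ1, hℓH, s', hvv, rfl⟩
    exact M.key_ineq hdet π ℓ hℓ1 hℓH s' hvv
  exact le_antisymm (csSup_le ⟨_, hmem⟩ hub) (le_csSup ⟨_, hub⟩ hmem)

end MDP

/-- Proposition 1(iii): in an MDP with deterministic transitions,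
the conditional return gap equals the return gap. -/
theorem tildeGap_eq_barGap_of_deterministic {S A : Type} [Fintype S] [Nonempty S]
    [Fintype A] [Nonempty A] [DecidableEq S] [DecidableEq A] (M : MDP S A)
    (hdet : ∀ h s a, 1 ≤ h → h ≤ M.H → ∃ s' : S, M.p h s a s' = 1)
    (h : ℕ) (hh1 : 1 ≤ h) (hhH : h ≤ M.H) (s : S) (a : A)
    (hex : ∃ π : ℕ → S → A, M.visitSA π h s a > 0) :
    M.tildeGap h s a = M.barGap h s a := by
  obtain ⟨π₀, hπ₀⟩ := hex
  set c : ℝ := M.optVal 1 M.s1 with hc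
  set T : Set ℝ := {x : ℝ | ∃ π : ℕ → S → A, M.visitSA π h s a > 0 ∧ x = M.polVal π 1 M.s1}
    with hT
  have hTne : T.Nonempty := ⟨_, π₀, hπ₀, rfl⟩
  have hTbdd : BddAbove T := by
    refine ⟨c, ?_⟩
    rintro x ⟨π, -, rfl⟩
    exact M.polVal_le_optVal1 π
  have hSeq : {x : ℝ | ∃ π : ℕ → S → A, M.visitSA π h s a > 0 ∧ x = M.condRetGap π} =
      {x : ℝ | ∃ π : ℕ → S → A, M.visitSA π h s a > 0 ∧ x = c - M.polVal π 1 M.s1} := by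
    ext x
    constructor
    · rintro ⟨π, hπ, rfl⟩
      exact ⟨π, hπ, (M.condRetGap_eq' hdet π)⟩
    · rintro ⟨π, hπ, rfl⟩
      exact ⟨π, hπ, (M.condRetGap_eq' hdet π).symm⟩
  have hSbdd : BddBelow {x : ℝ | ∃ π : ℕ → S → A, M.visitSA π h s a > 0 ∧
      x = c - M.polVal π 1 M.s1} := by
    refine ⟨c - sSup T, ?_⟩
    rintro x ⟨π, hπ, rfl⟩
    have : M.polVal π 1 M.s1 ≤ sSup T := le_csSup hTbdd ⟨π, hπ, rfl⟩
    linarith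
  have hSne : {x : ℝ | ∃ π : ℕ → S → A, M.visitSA π h s a > 0 ∧
      x = c - M.polVal π 1 M.s1}.Nonempty := ⟨_, π₀, hπ₀, rfl⟩
  rw [MDP.tildeGap, hSeq, MDP.barGap]
  refine le_antisymm ?_ ?_
  · have h1 : sSup T ≤ c - sInf {x : ℝ | ∃ π : ℕ → S → A, M.visitSA π h s a > 0 ∧
        x = c - M.polVal π 1 M.s1} := by
      apply csSup_le hTne
      rintro y ⟨π, hπ, rfl⟩
      have := csInf_le hSbdd (⟨π, hπ, rfl⟩ : (c - M.polVal π 1 M.s1) ∈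
        {x : ℝ | ∃ π : ℕ → S → A, M.visitSA π h s a > 0 ∧ x = c - M.polVal π 1 M.s1})
      linarith
    linarith
  · apply le_csInf hSne
    rintro x ⟨π, hπ, rfl⟩
    have : M.polVal π 1 M.s1 ≤ sSup T := le_csSup hTbdd ⟨π, hπ, rfl⟩
    linarith
end

section
/- Lemma 2 (deterministic form, policy value gap vs confidence width): Let π be any policy that is greedy with respect to the optimistic Q-values, i.e., π_h(s) ∈ argmax_{a∈A} Q̄_h(s,a) for all h ∈ {1,...,H} and s ∈ S. Then for every stage h ∈ {1,...,H} and state s ∈ S, V*_h(s) − V^π_h(s) ≤ 2 Σ_{ℓ=h}^{H} Σ_{s'∈S} p^π_ℓ(s'|s,h) · b_ℓ(s',π_ℓ(s')). -/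
namespace MDP

section Estimates

variable {S A : Type} [Fintype S] [Fintype A] [DecidableEq S] [DecidableEq A] [Nonempty A]
variable (M : MDP S A)
variable (rhat : ℕ → S → A → ℝ) (phat : ℕ → S → A → S → ℝ) (b : ℕ → S → A → ℝ)

/-- Fuel-indexed optimistic value: `VbarAux M rhat phat b k s = V̄_{H+1-k}(s)`. -/
noncomputable def VbarAux : ℕ → S → ℝ
  | 0, _ => 0
  | k + 1, s => ⨆ a : A, min ((k : ℝ) + 1)
      (rhat (M.H - k) s a + b (M.H - k) s a +
        ∑ s' : S, phat (M.H - k) s a s' * VbarAux k s')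

/-- Optimistic value `V̄_h(s)`, for `1 ≤ h ≤ H + 1`. -/
noncomputable def Vbar (h : ℕ) (s : S) : ℝ := VbarAux M rhat phat b (M.H + 1 - h) s

/-- Optimistic Q-value `Q̄_h(s,a)`. -/
noncomputable def Qbar (h : ℕ) (s : S) (a : A) : ℝ :=
  min ((M.H : ℝ) - h + 1)
    (rhat h s a + b h s a + ∑ s' : S, phat h s a s' * Vbar M rhat phat b (h + 1) s')

/-- Fuel-indexed pessimistic value: `VlowAux M rhat phat b k s = Vlow_{H+1-k}(s)`. -/
noncomputable def VlowAux : ℕ → S → ℝ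
  | 0, _ => 0
  | k + 1, s => ⨆ a : A, max 0
      (rhat (M.H - k) s a - b (M.H - k) s a +
        ∑ s' : S, phat (M.H - k) s a s' * VlowAux k s')

/-- Pessimistic value `Vlow_h(s)`, for `1 ≤ h ≤ H + 1`. -/
noncomputable def Vlow (h : ℕ) (s : S) : ℝ := VlowAux M rhat phat b (M.H + 1 - h) s

/-- Pessimistic Q-value `Qlow_h(s,a)`. -/
noncomputable def Qlow (h : ℕ) (s : S) (a : A) : ℝ :=
  max 0 (rhat h s a - b h s a + ∑ s' : S, phat h s a s' * Vlow M rhat phat b (h + 1) s')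

variable (π : ℕ → S → A)

/-- Fuel-indexed policy-specific optimistic value `V̄^π`. -/
noncomputable def VbarPolAux : ℕ → S → ℝ
  | 0, _ => 0
  | k + 1, s => min ((k : ℝ) + 1)
      (rhat (M.H - k) s (π (M.H - k) s) + b (M.H - k) s (π (M.H - k) s) +
        ∑ s' : S, phat (M.H - k) s (π (M.H - k) s) s' * VbarPolAux k s')

/-- Policy-specific optimistic value `V̄^π_h(s)`. -/
noncomputable def VbarPol (h : ℕ) (s : S) : ℝ := VbarPolAux M rhat phat b π (M.H + 1 - h) s

/-- Policy-specific optimistic Q-value `Q̄^π_h(s,a)`. -/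
noncomputable def QbarPol (h : ℕ) (s : S) (a : A) : ℝ :=
  min ((M.H : ℝ) - h + 1)
    (rhat h s a + b h s a + ∑ s' : S, phat h s a s' * VbarPol M rhat phat b π (h + 1) s')

/-- Fuel-indexed policy-specific pessimistic value `Vlow^π`. -/
noncomputable def VlowPolAux : ℕ → S → ℝ
  | 0, _ => 0
  | k + 1, s => max 0
      (rhat (M.H - k) s (π (M.H - k) s) - b (M.H - k) s (π (M.H - k) s) +
        ∑ s' : S, phat (M.H - k) s (π (M.H - k) s) s' * VlowPolAux k s')

/-- Policy-specific pessimistic value `Vlow^π_h(s)`. -/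
noncomputable def VlowPol (h : ℕ) (s : S) : ℝ := VlowPolAux M rhat phat b π (M.H + 1 - h) s

/-- Policy-specific pessimistic Q-value `Qlow^π_h(s,a)`. -/
noncomputable def QlowPol (h : ℕ) (s : S) (a : A) : ℝ :=
  max 0 (rhat h s a - b h s a + ∑ s' : S, phat h s a s' * VlowPol M rhat phat b π (h + 1) s')

end Estimates

end MDP

section AuxLemmas
set_option linter.unusedSectionVars false

variable {S A : Type} [Fintype S] [Nonempty S] [Fintype A] [Nonempty A]
  [DecidableEq S] [DecidableEq A]

lemma sum_dev_le (p q V : S → ℝ) (C : ℝ)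
    (hV : ∀ s', 0 ≤ V s' ∧ V s' ≤ C) :
    ∑ s' : S, p s' * V s' - ∑ s' : S, q s' * V s' ≤ (∑ s' : S, |p s' - q s'|) * C := by
  rw [← Finset.sum_sub_distrib, Finset.sum_mul]
  apply Finset.sum_le_sum; intro s' _
  rw [← sub_mul]
  calc (p s' - q s') * V s' ≤ |p s' - q s'| * V s' :=
        mul_le_mul_of_nonneg_right (le_abs_self _) (hV s').1
    _ ≤ |p s' - q s'| * C := mul_le_mul_of_nonneg_left (hV s').2 (abs_nonneg _)

lemma MDP.optValAux_bounds (M : MDP S A) :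
    ∀ k, k ≤ M.H → ∀ s : S, 0 ≤ M.optValAux k s ∧ M.optValAux k s ≤ (k : ℝ) := by
  intro k
  induction k with
  | zero => intro _ s; simp [MDP.optValAux]
  | succ k ih =>
    intro hk s
    have hk' : k ≤ M.H := Nat.le_of_succ_le hk
    have h1 : 1 ≤ M.H - k := by omega
    have h2 : M.H - k ≤ M.H := by omega
    have hbdd : BddAbove (Set.range fun a : A =>
        M.r (M.H - k) s a + ∑ s' : S, M.p (M.H - k) s a s' * M.optValAux k s') :=
      (Set.finite_range _).bddAbove
    rw [MDP.optValAux]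
    constructor
    · obtain ⟨a⟩ := (inferInstance : Nonempty A)
      refine le_trans ?_ (le_ciSup hbdd a)
      have hr := M.r_nonneg (M.H - k) s a h1 h2
      have hs : (0:ℝ) ≤ ∑ s' : S, M.p (M.H - k) s a s' * M.optValAux k s' :=
        Finset.sum_nonneg fun s' _ =>
          mul_nonneg (M.p_nonneg (M.H - k) s a s' h1 h2) (ih hk' s').1
      linarith
    · apply ciSup_le
      intro a
      have hr := M.r_le_one (M.H - k) s a h1 h2
      have hs : ∑ s' : S, M.p (M.H - k) s a s' * M.optValAux k s' ≤ (k : ℝ) := by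
        calc ∑ s' : S, M.p (M.H - k) s a s' * M.optValAux k s'
            ≤ ∑ s' : S, M.p (M.H - k) s a s' * (k : ℝ) :=
              Finset.sum_le_sum fun s' _ =>
                mul_le_mul_of_nonneg_left (ih hk' s').2 (M.p_nonneg (M.H - k) s a s' h1 h2)
          _ = (k : ℝ) := by rw [← Finset.sum_mul, M.p_sum_one (M.H - k) s a h1 h2, one_mul]
      push_cast
      linarith


lemma MDP.VbarAux_bounds (M : MDP S A) (rhat : ℕ → S → A → ℝ)
    (phat : ℕ → S → A → S → ℝ) (b : ℕ → S → A → ℝ)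
    (hphat_nonneg : ∀ h s a s', 1 ≤ h → h ≤ M.H → 0 ≤ phat h s a s')
    (hconc : ∀ h s a, 1 ≤ h → h ≤ M.H →
      |rhat h s a - M.r h s a| +
        ((M.H : ℝ) - h) * ∑ s' : S, |phat h s a s' - M.p h s a s'| ≤ b h s a) :
    ∀ k, k ≤ M.H → ∀ s : S,
      0 ≤ MDP.VbarAux M rhat phat b k s ∧ MDP.VbarAux M rhat phat b k s ≤ (k : ℝ) := by
  intro k
  induction k with
  | zero => intro _ s; simp [MDP.VbarAux]
  | succ k ih =>
    intro hk s
    have hk' : k ≤ M.H := Nat.le_of_succ_le hk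
    have h1 : 1 ≤ M.H - k := by omega
    have h2 : M.H - k ≤ M.H := by omega
    have hbdd : BddAbove (Set.range fun a : A => min ((k : ℝ) + 1)
        (rhat (M.H - k) s a + b (M.H - k) s a +
          ∑ s' : S, phat (M.H - k) s a s' * MDP.VbarAux M rhat phat b k s')) :=
      (Set.finite_range _).bddAbove
    rw [MDP.VbarAux]
    constructor
    · obtain ⟨a⟩ := (inferInstance : Nonempty A)
      refine le_trans ?_ (le_ciSup hbdd a)
      have hrb : |rhat (M.H - k) s a - M.r (M.H - k) s a| ≤ b (M.H - k) s a := by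
        have hc := hconc (M.H - k) s a h1 h2
        have hHh : (0:ℝ) ≤ (M.H : ℝ) - (M.H - k : ℕ) := by
          have : ((M.H - k : ℕ) : ℝ) ≤ (M.H : ℝ) := by exact_mod_cast h2
          linarith
        have habs : (0:ℝ) ≤ ∑ s' : S, |phat (M.H - k) s a s' - M.p (M.H - k) s a s'| :=
          Finset.sum_nonneg fun _ _ => abs_nonneg _
        nlinarith
      have hr := M.r_nonneg (M.H - k) s a h1 h2
      have hs : (0:ℝ) ≤ ∑ s' : S, phat (M.H - k) s a s' * MDP.VbarAux M rhat phat b k s' :=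
        Finset.sum_nonneg fun s' _ =>
          mul_nonneg (hphat_nonneg (M.H - k) s a s' h1 h2) (ih hk' s').1
      have h1abs := abs_le.mp hrb
      have : (0:ℝ) ≤ (k : ℝ) + 1 := by positivity
      simp only [le_min_iff]
      constructor
      · linarith
      · linarith [h1abs.1]
    · apply ciSup_le
      intro a
      push_cast
      exact min_le_left _ _

lemma MDP.optValAux_le_VbarAux (M : MDP S A) (rhat : ℕ → S → A → ℝ)
    (phat : ℕ → S → A → S → ℝ) (b : ℕ → S → A → ℝ)
    (hphat_nonneg : ∀ h s a s', 1 ≤ h → h ≤ M.H → 0 ≤ phat h s a s')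
    (hconc : ∀ h s a, 1 ≤ h → h ≤ M.H →
      |rhat h s a - M.r h s a| +
        ((M.H : ℝ) - h) * ∑ s' : S, |phat h s a s' - M.p h s a s'| ≤ b h s a) :
    ∀ k, k ≤ M.H → ∀ s : S, M.optValAux k s ≤ MDP.VbarAux M rhat phat b k s := by
  intro k
  induction k with
  | zero => intro _ s; simp [MDP.optValAux, MDP.VbarAux]
  | succ k ih =>
    intro hk s
    have hk' : k ≤ M.H := Nat.le_of_succ_le hk
    have h1 : 1 ≤ M.H - k := by omega
    have h2 : M.H - k ≤ M.H := by omega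
    have hbdd : BddAbove (Set.range fun a : A => min ((k : ℝ) + 1)
        (rhat (M.H - k) s a + b (M.H - k) s a +
          ∑ s' : S, phat (M.H - k) s a s' * MDP.VbarAux M rhat phat b k s')) :=
      (Set.finite_range _).bddAbove
    rw [MDP.optValAux, MDP.VbarAux]
    apply ciSup_le
    intro a
    refine le_trans ?_ (le_ciSup hbdd a)
    have hcast : ((M.H - k : ℕ) : ℝ) = (M.H : ℝ) - (k : ℝ) := by
      push_cast [Nat.cast_sub hk']; ring
    have hVb := fun s' => MDP.VbarAux_bounds M rhat phat b hphat_nonneg hconc k hk' s'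
    have hOp := fun s' => MDP.optValAux_bounds M k hk' s'
    refine le_min ?_ ?_
    · have hr := M.r_le_one (M.H - k) s a h1 h2
      have hs : ∑ s' : S, M.p (M.H - k) s a s' * M.optValAux k s' ≤ (k : ℝ) := by
        calc ∑ s' : S, M.p (M.H - k) s a s' * M.optValAux k s'
            ≤ ∑ s' : S, M.p (M.H - k) s a s' * (k : ℝ) :=
              Finset.sum_le_sum fun s' _ =>
                mul_le_mul_of_nonneg_left (hOp s').2 (M.p_nonneg (M.H - k) s a s' h1 h2)
          _ = (k : ℝ) := by rw [← Finset.sum_mul, M.p_sum_one (M.H - k) s a h1 h2, one_mul]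
      linarith
    · have step1 : ∑ s' : S, M.p (M.H - k) s a s' * M.optValAux k s'
          ≤ ∑ s' : S, M.p (M.H - k) s a s' * MDP.VbarAux M rhat phat b k s' :=
        Finset.sum_le_sum fun s' _ =>
          mul_le_mul_of_nonneg_left (ih hk' s') (M.p_nonneg (M.H - k) s a s' h1 h2)
      have step2 : ∑ s' : S, M.p (M.H - k) s a s' * MDP.VbarAux M rhat phat b k s'
            - ∑ s' : S, phat (M.H - k) s a s' * MDP.VbarAux M rhat phat b k s'
          ≤ (∑ s' : S, |M.p (M.H - k) s a s' - phat (M.H - k) s a s'|) * (k : ℝ) :=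
        sum_dev_le _ _ _ _ hVb
      have hc := hconc (M.H - k) s a h1 h2
      have habs : ∑ s' : S, |M.p (M.H - k) s a s' - phat (M.H - k) s a s'|
          = ∑ s' : S, |phat (M.H - k) s a s' - M.p (M.H - k) s a s'| := by
        apply Finset.sum_congr rfl; intro s' _; rw [abs_sub_comm]
      rw [habs] at step2
      rw [hcast, show (M.H : ℝ) - ((M.H : ℝ) - (k : ℝ)) = (k : ℝ) from by ring] at hc
      have habs2 : M.r (M.H - k) s a - rhat (M.H - k) s a
          ≤ |rhat (M.H - k) s a - M.r (M.H - k) s a| := by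
        rw [abs_sub_comm]; exact le_abs_self _
      linarith

lemma MDP.cvisitAux_peel (M : MDP S A) (π : ℕ → S → A) (h : ℕ) (s : S) :
    ∀ j (s' : S), M.cvisitAux π s h (j + 1) s' =
      ∑ s'' : S, M.p h s (π h s) s'' * M.cvisitAux π s'' (h + 1) j s' := by
  intro j
  induction j with
  | zero =>
    intro s'
    simp [MDP.cvisitAux]
  | succ j ih =>
    intro s'
    rw [show j + 1 + 1 = (j + 1) + 1 from rfl, MDP.cvisitAux]
    have : ∀ t : S, M.cvisitAux π s h (j + 1) t =
        ∑ s'' : S, M.p h s (π h s) s'' * M.cvisitAux π s'' (h + 1) j t := ih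
    calc ∑ t : S, M.cvisitAux π s h (j + 1) t * M.p (h + (j+1)) t (π (h + (j+1)) t) s'
        = ∑ t : S, (∑ s'' : S, M.p h s (π h s) s'' * M.cvisitAux π s'' (h + 1) j t)
            * M.p (h + (j+1)) t (π (h + (j+1)) t) s' := by
          apply Finset.sum_congr rfl; intro t _; rw [this t]
      _ = ∑ s'' : S, M.p h s (π h s) s'' *
            ∑ t : S, M.cvisitAux π s'' (h + 1) j t * M.p (h + (j+1)) t (π (h + (j+1)) t) s' := by
          simp_rw [Finset.sum_mul, Finset.mul_sum]
          rw [Finset.sum_comm]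
          apply Finset.sum_congr rfl; intro s'' _
          apply Finset.sum_congr rfl; intro t _; ring
      _ = ∑ s'' : S, M.p h s (π h s) s'' * M.cvisitAux π s'' (h + 1) (j + 1) s' := by
          apply Finset.sum_congr rfl; intro s'' _
          congr 1
          rw [MDP.cvisitAux]
          apply Finset.sum_congr rfl; intro t _
          rw [show h + 1 + j = h + (j + 1) from by omega]


lemma MDP.main_gap (M : MDP S A) (rhat : ℕ → S → A → ℝ)
    (phat : ℕ → S → A → S → ℝ) (b : ℕ → S → A → ℝ)
    (hphat_nonneg : ∀ h s a s', 1 ≤ h → h ≤ M.H → 0 ≤ phat h s a s')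
    (hconc : ∀ h s a, 1 ≤ h → h ≤ M.H →
      |rhat h s a - M.r h s a| +
        ((M.H : ℝ) - h) * ∑ s' : S, |phat h s a s' - M.p h s a s'| ≤ b h s a)
    (π : ℕ → S → A)
    (hgreedy : ∀ h s, 1 ≤ h → h ≤ M.H → ∀ a : A,
      MDP.Qbar M rhat phat b h s a ≤ MDP.Qbar M rhat phat b h s (π h s)) :
    ∀ n h, 1 ≤ h → h + n = M.H + 1 → ∀ s : S,
      MDP.Vbar M rhat phat b h s - M.polVal π h s ≤
        2 * ∑ ℓ ∈ Finset.Icc h M.H, ∑ s' : S, M.cvisit π s h ℓ s' * b ℓ s' (π ℓ s') := by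
  intro n
  induction n with
  | zero =>
    intro h h1 hsum s
    have heq : h = M.H + 1 := by omega
    subst heq
    rw [MDP.Vbar, MDP.polVal, Nat.sub_self]
    simp [MDP.VbarAux, MDP.polValAux, Finset.Icc_eq_empty_of_lt (by omega : M.H < M.H + 1)]
  | succ n ih =>
    intro h h1 hsum s
    have hhH : h ≤ M.H := by omega
    have hfuel : M.H + 1 - h = (M.H - h) + 1 := by omega
    have hstage : M.H - (M.H - h) = h := by omega
    have hfuel' : M.H + 1 - (h + 1) = M.H - h := by omega
    have hcast : ((M.H - h : ℕ) : ℝ) = (M.H : ℝ) - (h : ℝ) := by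
      push_cast [Nat.cast_sub hhH]; ring
    -- Vbar h s = sup of Qbar
    have hVbar_eq : MDP.Vbar M rhat phat b h s = ⨆ a : A, MDP.Qbar M rhat phat b h s a := by
      rw [MDP.Vbar, hfuel, MDP.VbarAux]
      apply congrArg
      funext a'
      rw [hstage, MDP.Qbar]
      simp only [MDP.Vbar, hfuel']
      congr 1
      rw [hcast]
    have hQle : MDP.Vbar M rhat phat b h s ≤
        rhat h s (π h s) + b h s (π h s) +
          ∑ s' : S, phat h s (π h s) s' * MDP.Vbar M rhat phat b (h + 1) s' := by
      rw [hVbar_eq]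
      refine le_trans (ciSup_le fun a' => hgreedy h s h1 hhH a') (min_le_right _ _)
    have hpol : M.polVal π h s = M.r h s (π h s) +
        ∑ s' : S, M.p h s (π h s) s' * M.polVal π (h + 1) s' := by
      rw [MDP.polVal, hfuel, MDP.polValAux, hstage]
      simp only [MDP.polVal, hfuel']
    have hVb : ∀ s' : S, 0 ≤ MDP.Vbar M rhat phat b (h + 1) s' ∧
        MDP.Vbar M rhat phat b (h + 1) s' ≤ ((M.H - h : ℕ) : ℝ) := by
      intro s'
      rw [MDP.Vbar, hfuel']
      exact MDP.VbarAux_bounds M rhat phat b hphat_nonneg hconc (M.H - h) (by omega) s'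
    have hstep2 : ∑ s' : S, phat h s (π h s) s' * MDP.Vbar M rhat phat b (h + 1) s'
          - ∑ s' : S, M.p h s (π h s) s' * MDP.Vbar M rhat phat b (h + 1) s'
        ≤ (∑ s' : S, |phat h s (π h s) s' - M.p h s (π h s) s'|) * ((M.H : ℝ) - (h : ℝ)) := by
      rw [← hcast]
      exact sum_dev_le _ _ _ _ hVb
    have hc := hconc h s (π h s) h1 hhH
    have habs2 : rhat h s (π h s) - M.r h s (π h s)
        ≤ |rhat h s (π h s) - M.r h s (π h s)| := le_abs_self _
    have hsum3 : ∑ s' : S, M.p h s (π h s) s' * MDP.Vbar M rhat phat b (h + 1) s'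
          - ∑ s' : S, M.p h s (π h s) s' * M.polVal π (h + 1) s'
        ≤ ∑ s' : S, M.p h s (π h s) s' * (2 * ∑ ℓ ∈ Finset.Icc (h + 1) M.H,
            ∑ s'' : S, M.cvisit π s' (h + 1) ℓ s'' * b ℓ s'' (π ℓ s'')) := by
      rw [← Finset.sum_sub_distrib]
      apply Finset.sum_le_sum; intro s' _
      rw [← mul_sub]
      exact mul_le_mul_of_nonneg_left (ih (h + 1) (by omega) (by omega) s')
        (M.p_nonneg h s (π h s) s' h1 hhH)
    -- RHS decomposition
    have hT : ∑ s' : S, M.cvisit π s h h s' * b h s' (π h s') = b h s (π h s) := by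
      simp only [MDP.cvisit, Nat.sub_self, MDP.cvisitAux]
      rw [Finset.sum_eq_single_of_mem s (Finset.mem_univ s)]
      · simp
      · intro t _ hts; simp [hts]
    have hC : ∀ ℓ ∈ Finset.Ioc h M.H, ∀ s'' : S, M.cvisit π s h ℓ s''
        = ∑ s' : S, M.p h s (π h s) s' * M.cvisit π s' (h + 1) ℓ s'' := by
      intro ℓ hl s''
      have hl' : h + 1 ≤ ℓ := (Finset.mem_Ioc.mp hl).1
      rw [MDP.cvisit, show ℓ - h = (ℓ - (h + 1)) + 1 from by omega, MDP.cvisitAux_peel]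
      apply Finset.sum_congr rfl; intro s' _
      rw [MDP.cvisit]
    have hswap : ∑ ℓ ∈ Finset.Ioc h M.H, ∑ s'' : S, M.cvisit π s h ℓ s'' * b ℓ s'' (π ℓ s'')
        = ∑ s' : S, M.p h s (π h s) s' * ∑ ℓ ∈ Finset.Ioc h M.H,
            ∑ s'' : S, M.cvisit π s' (h + 1) ℓ s'' * b ℓ s'' (π ℓ s'') := by
      calc ∑ ℓ ∈ Finset.Ioc h M.H, ∑ s'' : S, M.cvisit π s h ℓ s'' * b ℓ s'' (π ℓ s'')
          = ∑ ℓ ∈ Finset.Ioc h M.H, ∑ s'' : S, ∑ s' : S,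
              M.p h s (π h s) s' * (M.cvisit π s' (h + 1) ℓ s'' * b ℓ s'' (π ℓ s'')) := by
            apply Finset.sum_congr rfl; intro ℓ hl
            apply Finset.sum_congr rfl; intro s'' _
            rw [hC ℓ hl s'', Finset.sum_mul]
            apply Finset.sum_congr rfl; intro s' _; ring
        _ = ∑ ℓ ∈ Finset.Ioc h M.H, ∑ s' : S, ∑ s'' : S,
              M.p h s (π h s) s' * (M.cvisit π s' (h + 1) ℓ s'' * b ℓ s'' (π ℓ s'')) := by
            apply Finset.sum_congr rfl; intro ℓ _
            rw [Finset.sum_comm]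
        _ = ∑ s' : S, ∑ ℓ ∈ Finset.Ioc h M.H, ∑ s'' : S,
              M.p h s (π h s) s' * (M.cvisit π s' (h + 1) ℓ s'' * b ℓ s'' (π ℓ s'')) :=
            Finset.sum_comm
        _ = ∑ s' : S, M.p h s (π h s) s' * ∑ ℓ ∈ Finset.Ioc h M.H,
              ∑ s'' : S, M.cvisit π s' (h + 1) ℓ s'' * b ℓ s'' (π ℓ s'') := by
            apply Finset.sum_congr rfl; intro s' _
            simp_rw [Finset.mul_sum]
    have hRHS : 2 * ∑ ℓ ∈ Finset.Icc h M.H, ∑ s' : S, M.cvisit π s h ℓ s' * b ℓ s' (π ℓ s')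
        = 2 * b h s (π h s) + ∑ s' : S, M.p h s (π h s) s' *
            (2 * ∑ ℓ ∈ Finset.Icc (h + 1) M.H,
              ∑ s'' : S, M.cvisit π s' (h + 1) ℓ s'' * b ℓ s'' (π ℓ s'')) := by
      rw [← Finset.Ioc_insert_left hhH, Finset.sum_insert Finset.left_notMem_Ioc, hT]
      simp_rw [Finset.Icc_add_one_left_eq_Ioc]
      rw [hswap, mul_add, Finset.mul_sum]
      congr 1
      apply Finset.sum_congr rfl; intro s' _; ring
    rw [hRHS, hpol]
    linarith
end AuxLemmas
/-- Lemma 2 (deterministic form): the value loss of a policy greedy w.r.t. the optimistic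
Q-values is bounded by twice the expected sum of bonuses along its trajectory. -/
theorem value_gap_le_conf_width {S A : Type} [Fintype S] [Nonempty S] [Fintype A] [Nonempty A]
    [DecidableEq S] [DecidableEq A] (M : MDP S A)
    (rhat : ℕ → S → A → ℝ) (phat : ℕ → S → A → S → ℝ) (b : ℕ → S → A → ℝ)
    (hphat_nonneg : ∀ h s a s', 1 ≤ h → h ≤ M.H → 0 ≤ phat h s a s')
    (hphat_sum : ∀ h s a, 1 ≤ h → h ≤ M.H → ∑ s' : S, phat h s a s' = 1)
    (hb_nonneg : ∀ h s a, 1 ≤ h → h ≤ M.H → 0 ≤ b h s a)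
    (hconc : ∀ h s a, 1 ≤ h → h ≤ M.H →
      |rhat h s a - M.r h s a| +
        ((M.H : ℝ) - h) * ∑ s' : S, |phat h s a s' - M.p h s a s'| ≤ b h s a)
    (π : ℕ → S → A)
    (hgreedy : ∀ h s, 1 ≤ h → h ≤ M.H → ∀ a : A,
      MDP.Qbar M rhat phat b h s a ≤ MDP.Qbar M rhat phat b h s (π h s))
    (h : ℕ) (hh1 : 1 ≤ h) (hhH : h ≤ M.H) (s : S) :
    M.optVal h s - M.polVal π h s ≤
      2 * ∑ ℓ ∈ Finset.Icc h M.H, ∑ s' : S, M.cvisit π s h ℓ s' * b ℓ s' (π ℓ s') := by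
  have hopt : M.optVal h s ≤ MDP.Vbar M rhat phat b h s :=
    MDP.optValAux_le_VbarAux M rhat phat b hphat_nonneg hconc (M.H + 1 - h) (by omega) s
  have hmain := MDP.main_gap M rhat phat b hphat_nonneg hconc π hgreedy
    (M.H + 1 - h) h hh1 (by omega) s
  linarith
end

section
/- Lemma (deterministic form of Lemma conf-Q, optimal values): For all h ∈ {1,...,H}, s ∈ S and a ∈ A, the pessimistic and optimistic Q-values bracket the optimal action-values: Qlow_h(s,a) ≤ Q*_h(s,a) ≤ Q̄_h(s,a). -/
private lemma mdp_step_lemma {S A : Type} [Fintype S] [Fintype A] (M : MDP S A)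
    (rhat : ℕ → S → A → ℝ) (phat : ℕ → S → A → S → ℝ) (b : ℕ → S → A → ℝ)
    (h : ℕ) (hh1 : 1 ≤ h) (hhH : h ≤ M.H) (s : S) (a : A)
    (Vlo Vst Vhi : S → ℝ)
    (hV0 : ∀ s', 0 ≤ Vst s') (hVk : ∀ s', Vst s' ≤ (M.H : ℝ) - h)
    (hlo : ∀ s', Vlo s' ≤ Vst s') (hhi : ∀ s', Vst s' ≤ Vhi s')
    (hphat_nonneg : ∀ s', 0 ≤ phat h s a s')
    (hconc : |rhat h s a - M.r h s a| +
        ((M.H : ℝ) - h) * ∑ s' : S, |phat h s a s' - M.p h s a s'| ≤ b h s a) :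
    max 0 (rhat h s a - b h s a + ∑ s' : S, phat h s a s' * Vlo s') ≤
      M.r h s a + ∑ s' : S, M.p h s a s' * Vst s' ∧
    M.r h s a + ∑ s' : S, M.p h s a s' * Vst s' ≤
      min ((M.H : ℝ) - h + 1)
        (rhat h s a + b h s a + ∑ s' : S, phat h s a s' * Vhi s') := by
  have hp0 : ∀ s', 0 ≤ M.p h s a s' := fun s' => M.p_nonneg h s a s' hh1 hhH
  have habs : |∑ s' : S, (phat h s a s' - M.p h s a s') * Vst s'| ≤
      ((M.H : ℝ) - h) * ∑ s' : S, |phat h s a s' - M.p h s a s'| := by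
    calc |∑ s' : S, (phat h s a s' - M.p h s a s') * Vst s'|
        ≤ ∑ s' : S, |(phat h s a s' - M.p h s a s') * Vst s'| :=
          Finset.abs_sum_le_sum_abs _ _
      _ ≤ ∑ s' : S, |phat h s a s' - M.p h s a s'| * ((M.H : ℝ) - h) := by
          refine Finset.sum_le_sum fun s' _ => ?_
          rw [abs_mul]
          exact mul_le_mul_of_nonneg_left
            (by rw [abs_of_nonneg (hV0 s')]; exact hVk s') (abs_nonneg _)
      _ = ((M.H : ℝ) - h) * ∑ s' : S, |phat h s a s' - M.p h s a s'| := by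
          rw [← Finset.sum_mul, mul_comm]
  obtain ⟨habs1, habs2⟩ := abs_le.mp habs
  have hsplit : ∑ s' : S, phat h s a s' * Vst s' =
      (∑ s' : S, M.p h s a s' * Vst s') +
        ∑ s' : S, (phat h s a s' - M.p h s a s') * Vst s' := by
    rw [← Finset.sum_add_distrib]
    exact Finset.sum_congr rfl fun s' _ => by ring
  have hmono_lo : ∑ s' : S, phat h s a s' * Vlo s' ≤ ∑ s' : S, phat h s a s' * Vst s' :=
    Finset.sum_le_sum fun s' _ => mul_le_mul_of_nonneg_left (hlo s') (hphat_nonneg s')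
  have hmono_hi : ∑ s' : S, phat h s a s' * Vst s' ≤ ∑ s' : S, phat h s a s' * Vhi s' :=
    Finset.sum_le_sum fun s' _ => mul_le_mul_of_nonneg_left (hhi s') (hphat_nonneg s')
  have hr1 : rhat h s a - M.r h s a ≤ |rhat h s a - M.r h s a| := le_abs_self _
  have hr2 : -(rhat h s a - M.r h s a) ≤ |rhat h s a - M.r h s a| := neg_le_abs _
  have hpV0 : 0 ≤ ∑ s' : S, M.p h s a s' * Vst s' :=
    Finset.sum_nonneg fun s' _ => mul_nonneg (hp0 s') (hV0 s')
  have hpVk : ∑ s' : S, M.p h s a s' * Vst s' ≤ (M.H : ℝ) - h := by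
    calc ∑ s' : S, M.p h s a s' * Vst s'
        ≤ ∑ s' : S, M.p h s a s' * ((M.H : ℝ) - h) :=
          Finset.sum_le_sum fun s' _ => mul_le_mul_of_nonneg_left (hVk s') (hp0 s')
      _ = (M.H : ℝ) - h := by rw [← Finset.sum_mul, M.p_sum_one h s a hh1 hhH, one_mul]
  constructor
  · refine max_le (by linarith [M.r_nonneg h s a hh1 hhH]) ?_
    linarith
  · refine le_min (by linarith [M.r_le_one h s a hh1 hhH]) ?_
    linarith

private lemma mdp_bracket_aux {S A : Type} [Fintype S] [Fintype A] [Nonempty A]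
    (M : MDP S A)
    (rhat : ℕ → S → A → ℝ) (phat : ℕ → S → A → S → ℝ) (b : ℕ → S → A → ℝ)
    (hphat_nonneg : ∀ h s a s', 1 ≤ h → h ≤ M.H → 0 ≤ phat h s a s')
    (hconc : ∀ h s a, 1 ≤ h → h ≤ M.H →
      |rhat h s a - M.r h s a| +
        ((M.H : ℝ) - h) * ∑ s' : S, |phat h s a s' - M.p h s a s'| ≤ b h s a) :
    ∀ k, k ≤ M.H → ∀ s,
      0 ≤ M.optValAux k s ∧ M.optValAux k s ≤ (k : ℝ) ∧
      MDP.VlowAux M rhat phat b k s ≤ M.optValAux k s ∧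
      M.optValAux k s ≤ MDP.VbarAux M rhat phat b k s := by
  intro k
  induction k with
  | zero => intro _ s; simp [MDP.optValAux, MDP.VlowAux, MDP.VbarAux]
  | succ k ih =>
    intro hk s
    have hkH : k ≤ M.H := Nat.le_of_succ_le hk
    have ih' := ih hkH
    have hh1 : 1 ≤ M.H - k := by omega
    have hhH : M.H - k ≤ M.H := Nat.sub_le _ _
    have hcast : ((M.H : ℝ) - ((M.H - k : ℕ) : ℝ)) = (k : ℝ) := by
      rw [Nat.cast_sub hkH]; ring
    have hstep : ∀ s a,
        max 0 (rhat (M.H - k) s a - b (M.H - k) s a +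
          ∑ s' : S, phat (M.H - k) s a s' * MDP.VlowAux M rhat phat b k s') ≤
          M.r (M.H - k) s a + ∑ s' : S, M.p (M.H - k) s a s' * M.optValAux k s' ∧
        M.r (M.H - k) s a + ∑ s' : S, M.p (M.H - k) s a s' * M.optValAux k s' ≤
          min ((k : ℝ) + 1) (rhat (M.H - k) s a + b (M.H - k) s a +
            ∑ s' : S, phat (M.H - k) s a s' * MDP.VbarAux M rhat phat b k s') := by
      intro s a
      have := mdp_step_lemma M rhat phat b (M.H - k) hh1 hhH s a
        (MDP.VlowAux M rhat phat b k) (M.optValAux k) (MDP.VbarAux M rhat phat b k)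
        (fun s' => (ih' s').1) (fun s' => hcast ▸ (ih' s').2.1)
        (fun s' => (ih' s').2.2.1) (fun s' => (ih' s').2.2.2)
        (fun s' => hphat_nonneg _ s a s' hh1 hhH)
        (hconc (M.H - k) s a hh1 hhH)
      rwa [hcast] at this
    have hbdd : ∀ (g : A → ℝ), BddAbove (Set.range g) :=
      fun g => (Set.finite_range g).bddAbove
    simp only [MDP.optValAux, MDP.VlowAux, MDP.VbarAux]
    refine ⟨?_, ?_, ?_, ?_⟩
    · have a0 : A := Classical.arbitrary A
      refine le_trans ?_ (le_ciSup (hbdd _) a0)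
      exact le_trans (le_max_left 0 _) (hstep s a0).1
    · push_cast
      exact ciSup_le fun a => le_trans (hstep s a).2 (min_le_left _ _)
    · exact ciSup_mono (hbdd _) fun a => (hstep s a).1
    · exact ciSup_mono (hbdd _) fun a => (hstep s a).2

/-- The pessimistic and optimistic Q-values bracket the optimal action-values. -/
theorem Qlow_le_optQ_le_Qbar {S A : Type} [Fintype S] [Nonempty S] [Fintype A] [Nonempty A]
    [DecidableEq S] [DecidableEq A] (M : MDP S A)
    (rhat : ℕ → S → A → ℝ) (phat : ℕ → S → A → S → ℝ) (b : ℕ → S → A → ℝ)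
    (hphat_nonneg : ∀ h s a s', 1 ≤ h → h ≤ M.H → 0 ≤ phat h s a s')
    (hphat_sum : ∀ h s a, 1 ≤ h → h ≤ M.H → ∑ s' : S, phat h s a s' = 1)
    (hb_nonneg : ∀ h s a, 1 ≤ h → h ≤ M.H → 0 ≤ b h s a)
    (hconc : ∀ h s a, 1 ≤ h → h ≤ M.H →
      |rhat h s a - M.r h s a| +
        ((M.H : ℝ) - h) * ∑ s' : S, |phat h s a s' - M.p h s a s'| ≤ b h s a)
    (h : ℕ) (hh1 : 1 ≤ h) (hhH : h ≤ M.H) (s : S) (a : A) :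
    MDP.Qlow M rhat phat b h s a ≤ M.optQ h s a ∧
      M.optQ h s a ≤ MDP.Qbar M rhat phat b h s a := by
  have hkH : M.H - h ≤ M.H := Nat.sub_le _ _
  have hfuel : M.H + 1 - (h + 1) = M.H - h := by omega
  have hcast : ((M.H - h : ℕ) : ℝ) = (M.H : ℝ) - h := by
    rw [Nat.cast_sub hhH]
  have ih' := mdp_bracket_aux M rhat phat b hphat_nonneg hconc (M.H - h) hkH
  have hstep := mdp_step_lemma M rhat phat b h hh1 hhH s a
    (MDP.VlowAux M rhat phat b (M.H - h)) (M.optValAux (M.H - h))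
    (MDP.VbarAux M rhat phat b (M.H - h))
    (fun s' => (ih' s').1) (fun s' => hcast ▸ (ih' s').2.1)
    (fun s' => (ih' s').2.2.1) (fun s' => (ih' s').2.2.2)
    (fun s' => hphat_nonneg h s a s' hh1 hhH)
    (hconc h s a hh1 hhH)
  simpa only [MDP.Qlow, MDP.optQ, MDP.Qbar, MDP.optVal, MDP.Vlow, MDP.Vbar,
    hfuel] using hstep
end

section
/- Lemma (deterministic form of Lemma conf-Q, fixed policy): Fix any policy π ∈ Π, and define the policy-specific optimistic and pessimistic Q-values by Q̄^π_{H+1}(s,a) = 0, Q̄^π_h(s,a) = min(H−h+1, r̂_h(s,a) + b_h(s,a) + Σ_{s'∈S} p̂_h(s'|s,a) V̄^π_{h+1}(s')) with V̄^π_h(s) = Q̄^π_h(s,π_h(s)); and Qlow^π_{H+1}(s,a) = 0, Qlow^π_h(s,a) = max(0, r̂_h(s,a) − b_h(s,a) + Σ_{s'∈S} p̂_h(s'|s,a) Vlow^π_{h+1}(s')) with Vlow^π_h(s) = Qlow^π_h(s,π_h(s)). Then for all h ∈ {1,...,H}, s ∈ S and a ∈ A: Qlow^π_h(s,a) ≤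 Q^π_h(s,a) ≤ Q̄^π_h(s,a). -/
section AuxLemmas

lemma abs_sum_mul_sub' {S : Type} [Fintype S] (p q V : S → ℝ) (K : ℝ)
    (hV : ∀ s, |V s| ≤ K) :
    |∑ s : S, p s * V s - ∑ s : S, q s * V s| ≤ K * ∑ s : S, |p s - q s| := by
  rw [← Finset.sum_sub_distrib]
  calc |∑ s : S, (p s * V s - q s * V s)| ≤ ∑ s : S, |p s * V s - q s * V s| :=
        Finset.abs_sum_le_sum_abs _ _
    _ ≤ ∑ s : S, K * |p s - q s| := by
        apply Finset.sum_le_sum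
        intro i _
        have h1 : |p i * V i - q i * V i| = |p i - q i| * |V i| := by
          rw [← sub_mul, abs_mul]
        rw [h1]
        calc |p i - q i| * |V i| ≤ |p i - q i| * K :=
              mul_le_mul_of_nonneg_left (hV i) (abs_nonneg _)
          _ = K * |p i - q i| := mul_comm _ _
    _ = K * ∑ s : S, |p s - q s| := (Finset.mul_sum _ _ _).symm

lemma MDP.step_bounds {S A : Type} [Fintype S] [Fintype A] (M : MDP S A)
    (rhat : ℕ → S → A → ℝ) (phat : ℕ → S → A → S → ℝ) (b : ℕ → S → A → ℝ)
    (hphat_nonneg : ∀ h s a s', 1 ≤ h → h ≤ M.H → 0 ≤ phat h s a s')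
    (hconc : ∀ h s a, 1 ≤ h → h ≤ M.H →
      |rhat h s a - M.r h s a| +
        ((M.H : ℝ) - h) * ∑ s' : S, |phat h s a s' - M.p h s a s'| ≤ b h s a)
    (h : ℕ) (hh1 : 1 ≤ h) (hhH : h ≤ M.H) (s : S) (a : A)
    (V Vl Vb : S → ℝ)
    (hV0 : ∀ s', 0 ≤ V s') (hVK : ∀ s', V s' ≤ ((M.H - h : ℕ) : ℝ))
    (hl : ∀ s', Vl s' ≤ V s') (hu : ∀ s', V s' ≤ Vb s') :
    max 0 (rhat h s a - b h s a + ∑ s' : S, phat h s a s' * Vl s')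
      ≤ M.r h s a + ∑ s' : S, M.p h s a s' * V s' ∧
    M.r h s a + ∑ s' : S, M.p h s a s' * V s'
      ≤ min (((M.H - h : ℕ) : ℝ) + 1)
          (rhat h s a + b h s a + ∑ s' : S, phat h s a s' * Vb s') := by
  set K : ℝ := ((M.H - h : ℕ) : ℝ) with hK
  have hK0 : (0 : ℝ) ≤ K := Nat.cast_nonneg _
  have hKcast : K = (M.H : ℝ) - h := by rw [hK, Nat.cast_sub hhH]
  have habs : ∀ s', |V s'| ≤ K := fun s' =>
    abs_le.2 ⟨by linarith [hV0 s'], hVK s'⟩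
  have hdiff := abs_sum_mul_sub' (phat h s a) (M.p h s a) V K habs
  have hconc' := hconc h s a hh1 hhH
  rw [← hKcast] at hconc'
  have a1 := le_abs_self (rhat h s a - M.r h s a)
  have a2 := neg_abs_le (rhat h s a - M.r h s a)
  have a3 := le_abs_self (∑ s' : S, phat h s a s' * V s' - ∑ s' : S, M.p h s a s' * V s')
  have a4 := neg_abs_le (∑ s' : S, phat h s a s' * V s' - ∑ s' : S, M.p h s a s' * V s')
  have h2 : ∑ s' : S, phat h s a s' * V s' ≤ ∑ s' : S, phat h s a s' * Vb s' :=
    Finset.sum_le_sum fun i _ =>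
      mul_le_mul_of_nonneg_left (hu i) (hphat_nonneg h s a i hh1 hhH)
  have h3 : ∑ s' : S, phat h s a s' * Vl s' ≤ ∑ s' : S, phat h s a s' * V s' :=
    Finset.sum_le_sum fun i _ =>
      mul_le_mul_of_nonneg_left (hl i) (hphat_nonneg h s a i hh1 hhH)
  have h4 : ∑ s' : S, M.p h s a s' * V s' ≤ K := by
    calc ∑ s' : S, M.p h s a s' * V s' ≤ ∑ s' : S, M.p h s a s' * K :=
          Finset.sum_le_sum fun i _ =>
            mul_le_mul_of_nonneg_left (hVK i) (M.p_nonneg h s a i hh1 hhH)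
      _ = (∑ s' : S, M.p h s a s') * K := (Finset.sum_mul _ _ _).symm
      _ = K := by rw [M.p_sum_one h s a hh1 hhH, one_mul]
  have h5 : (0 : ℝ) ≤ ∑ s' : S, M.p h s a s' * V s' :=
    Finset.sum_nonneg fun i _ => mul_nonneg (M.p_nonneg h s a i hh1 hhH) (hV0 i)
  have hr0 := M.r_nonneg h s a hh1 hhH
  have hr1 := M.r_le_one h s a hh1 hhH
  constructor
  · apply max_le
    · linarith
    · linarith
  · apply le_min
    · linarith
    · linarith

lemma MDP.polValAux_bounds {S A : Type} [Fintype S] [Fintype A]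
    [DecidableEq S] [DecidableEq A] (M : MDP S A) (π : ℕ → S → A) :
    ∀ k, k ≤ M.H → ∀ s, 0 ≤ M.polValAux π k s ∧ M.polValAux π k s ≤ (k : ℝ) := by
  intro k
  induction k with
  | zero => intro _ s; simp [MDP.polValAux]
  | succ k ih =>
    intro hk s
    have hh1 : 1 ≤ M.H - k := by omega
    have hhH : M.H - k ≤ M.H := Nat.sub_le _ _
    have ih' := ih (by omega)
    set h := M.H - k
    have h4 : ∑ s' : S, M.p h s (π h s) s' * M.polValAux π k s' ≤ (k : ℝ) := by
      calc ∑ s' : S, M.p h s (π h s) s' * M.polValAux π k s'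
          ≤ ∑ s' : S, M.p h s (π h s) s' * (k : ℝ) :=
            Finset.sum_le_sum fun i _ =>
              mul_le_mul_of_nonneg_left (ih' i).2 (M.p_nonneg h s _ i hh1 hhH)
        _ = (∑ s' : S, M.p h s (π h s) s') * (k : ℝ) := (Finset.sum_mul _ _ _).symm
        _ = (k : ℝ) := by rw [M.p_sum_one h s _ hh1 hhH, one_mul]
    have h5 : (0 : ℝ) ≤ ∑ s' : S, M.p h s (π h s) s' * M.polValAux π k s' :=
      Finset.sum_nonneg fun i _ =>
        mul_nonneg (M.p_nonneg h s _ i hh1 hhH) (ih' i).1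
    have hr0 := M.r_nonneg h s (π h s) hh1 hhH
    have hr1 := M.r_le_one h s (π h s) hh1 hhH
    constructor
    · show 0 ≤ M.r h s (π h s) + _
      linarith
    · rw [Nat.cast_succ]
      show M.r h s (π h s) + _ ≤ (k : ℝ) + 1
      linarith

lemma MDP.bracket_aux {S A : Type} [Fintype S] [Fintype A]
    [DecidableEq S] [DecidableEq A] (M : MDP S A)
    (rhat : ℕ → S → A → ℝ) (phat : ℕ → S → A → S → ℝ) (b : ℕ → S → A → ℝ)
    (hphat_nonneg : ∀ h s a s', 1 ≤ h → h ≤ M.H → 0 ≤ phat h s a s')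
    (hconc : ∀ h s a, 1 ≤ h → h ≤ M.H →
      |rhat h s a - M.r h s a| +
        ((M.H : ℝ) - h) * ∑ s' : S, |phat h s a s' - M.p h s a s'| ≤ b h s a)
    (π : ℕ → S → A) :
    ∀ k, k ≤ M.H → ∀ s,
      MDP.VlowPolAux M rhat phat b π k s ≤ M.polValAux π k s ∧
      M.polValAux π k s ≤ MDP.VbarPolAux M rhat phat b π k s := by
  intro k
  induction k with
  | zero => intro _ s; simp [MDP.polValAux, MDP.VlowPolAux, MDP.VbarPolAux]
  | succ k ih =>
    intro hk s
    have hh1 : 1 ≤ M.H - k := by omega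
    have hhH : M.H - k ≤ M.H := Nat.sub_le _ _
    have hsub : M.H - (M.H - k) = k := Nat.sub_sub_self (by omega)
    have ih' := ih (by omega)
    have step := M.step_bounds rhat phat b hphat_nonneg hconc (M.H - k) hh1 hhH s
      (π (M.H - k) s) (M.polValAux π k) (MDP.VlowPolAux M rhat phat b π k)
      (MDP.VbarPolAux M rhat phat b π k)
      (fun s' => (M.polValAux_bounds π k (by omega) s').1)
      (fun s' => by rw [hsub]; exact (M.polValAux_bounds π k (by omega) s').2)
      (fun s' => (ih' s').1) (fun s' => (ih' s').2)
    rw [hsub] at step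
    exact step

end AuxLemmas

/-- For any fixed policy `π`, the policy-specific pessimistic and optimistic Q-values bracket
the Q-values of `π`. -/
theorem QlowPol_le_polQ_le_QbarPol {S A : Type} [Fintype S] [Nonempty S] [Fintype A] [Nonempty A]
    [DecidableEq S] [DecidableEq A] (M : MDP S A)
    (rhat : ℕ → S → A → ℝ) (phat : ℕ → S → A → S → ℝ) (b : ℕ → S → A → ℝ)
    (hphat_nonneg : ∀ h s a s', 1 ≤ h → h ≤ M.H → 0 ≤ phat h s a s')
    (hphat_sum : ∀ h s a, 1 ≤ h → h ≤ M.H → ∑ s' : S, phat h s a s' = 1)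
    (hb_nonneg : ∀ h s a, 1 ≤ h → h ≤ M.H → 0 ≤ b h s a)
    (hconc : ∀ h s a, 1 ≤ h → h ≤ M.H →
      |rhat h s a - M.r h s a| +
        ((M.H : ℝ) - h) * ∑ s' : S, |phat h s a s' - M.p h s a s'| ≤ b h s a)
    (π : ℕ → S → A)
    (h : ℕ) (hh1 : 1 ≤ h) (hhH : h ≤ M.H) (s : S) (a : A) :
    MDP.QlowPol M rhat phat b π h s a ≤ M.polQ π h s a ∧
      M.polQ π h s a ≤ MDP.QbarPol M rhat phat b π h s a := by
  have hsub : M.H + 1 - (h + 1) = M.H - h := by omega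
  have hle : M.H - h ≤ M.H := Nat.sub_le _ _
  have hbr := M.bracket_aux rhat phat b hphat_nonneg hconc π (M.H - h) hle
  have hbd := M.polValAux_bounds π (M.H - h) hle
  have step := M.step_bounds rhat phat b hphat_nonneg hconc h hh1 hhH s a
    (M.polValAux π (M.H - h)) (MDP.VlowPolAux M rhat phat b π (M.H - h))
    (MDP.VbarPolAux M rhat phat b π (M.H - h))
    (fun s' => (hbd s').1) (fun s' => (hbd s').2)
    (fun s' => (hbr s').1) (fun s' => (hbr s').2)
  rw [Nat.cast_sub hhH] at step
  unfold MDP.QlowPol MDP.QbarPol MDP.polQ MDP.polVal MDP.VlowPol MDP.VbarPol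
  rw [hsub]
  exact step
end

section
/- Lemma (solving a logarithmic fixed-point inequality): Let B, C and k be real numbers with B ≥ 1, C ≥ 1 and k ≥ 1. If k ≤ B·log(k) + C, then k ≤ B·log(B^2 + 2C) + C. -/
set_option maxHeartbeats 2000000 in
/-- Solving a logarithmic fixed-point inequality. -/
theorem log_fixed_point (B C k : ℝ) (hB : 1 ≤ B) (hC : 1 ≤ C) (hk : 1 ≤ k)
    (h : k ≤ B * Real.log k + C) :
    k ≤ B * Real.log (B ^ 2 + 2 * C) + C := by
  set t : ℝ := B ^ 2 + 2 * C with htdef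
  have ht3 : 3 ≤ t := by nlinarith
  have ht0 : (0 : ℝ) < t := by linarith
  have hk0 : (0 : ℝ) < k := by linarith
  set s : ℝ := Real.sqrt t with hsdef
  have hs0 : 0 < s := Real.sqrt_pos.mpr ht0
  have hst : s ^ 2 = t := Real.sq_sqrt ht0.le
  have he : (2.7 : ℝ) < Real.exp 1 := by
    have := Real.exp_one_gt_d9; norm_num at this ⊢; linarith
  have he0 : (0 : ℝ) < Real.exp 1 := Real.exp_pos 1
  -- log s ≤ s / e, hence e * log t ≤ 2 * s
  have hlogs : Real.exp 1 * Real.log s ≤ s := by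
    have hpos : 0 < s / Real.exp 1 := div_pos hs0 he0
    have h1 := Real.log_le_sub_one_of_pos hpos
    rw [Real.log_div hs0.ne' (Real.exp_ne_zero 1), Real.log_exp] at h1
    have : Real.log s ≤ s / Real.exp 1 := by linarith
    calc Real.exp 1 * Real.log s ≤ Real.exp 1 * (s / Real.exp 1) :=
          mul_le_mul_of_nonneg_left this he0.le
      _ = s := by field_simp
  have hlogt : Real.log t = 2 * Real.log s := by
    rw [← hst, Real.log_pow]; push_cast; ring
  have hlogt0 : 0 ≤ Real.log t := Real.log_nonneg (by linarith)
  -- key estimate: B * log t ≤ B^2 + C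
  have h2 : Real.exp 1 * Real.log t ≤ 2 * s := by
    rw [hlogt]; nlinarith
  have hsq : (2 * B * s) ^ 2 ≤ ((2.7 : ℝ) * (B ^ 2 + C)) ^ 2 := by nlinarith [sq_nonneg (B * C), sq_nonneg B, sq_nonneg C]
  have h3 : 2 * B * s ≤ 2.7 * (B ^ 2 + C) := by
    have h4 : 0 ≤ 2 * B * s := by positivity
    nlinarith
  have key : B * Real.log t ≤ B ^ 2 + C := by
    have h5 : Real.exp 1 * (B * Real.log t) ≤ 2 * B * s := by nlinarith
    have h6 : 2 * B * s ≤ Real.exp 1 * (B ^ 2 + C) := by nlinarith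
    have h7 : Real.exp 1 * (B * Real.log t) ≤ Real.exp 1 * (B ^ 2 + C) := le_trans h5 h6
    exact le_of_mul_le_mul_left h7 he0
  rcases le_or_gt k t with hkt | hkt
  · have hlk : Real.log k ≤ Real.log t := Real.log_le_log hk0 hkt
    nlinarith
  · exfalso
    have hlog_lt : Real.log t < Real.log k := Real.log_lt_log ht0 hkt
    have hq : Real.log (k / t) ≤ k / t - 1 :=
      Real.log_le_sub_one_of_pos (div_pos hk0 ht0)
    rw [Real.log_div hk0.ne' ht0.ne'] at hq
    have h5 : t * (Real.log k - Real.log t) ≤ k - t := by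
      have h7 := mul_le_mul_of_nonneg_left hq ht0.le
      have h8 : t * (k / t - 1) = k - t := by field_simp
      rw [h8] at h7; exact h7
    have hBt : B < t := by nlinarith
    have h9 : B * Real.log k - B * Real.log t < k - t := by
      linarith [h5, mul_pos (sub_pos.mpr hBt) (sub_pos.mpr hlog_lt)]
    linarith [h9, h, key]
end

section
/- Lemma (refined bound on the regret-to-PAC conversion time, from the proof of Theorem 2): Let S ≥ 4, A ≥ 2, H ≥ 2 be integers and let ε, δ ∈ (0,1] and T ≥ 1 be real numbers. If T·ε·δ ≤ (8/ε)·log(2SAH·T^2) + 2ε, then T ≤ (2/(ε^2·δ))·(36·log(2SAH) + 16·log(17/(ε^2·δ)) + 9ε^2). -/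
set_option maxHeartbeats 1000000 in
/-- Refined bound on the regret-to-PAC conversion time. -/
theorem refined_conversion_time_bound (S A H : ℕ) (hS : 4 ≤ S) (hA : 2 ≤ A) (hH : 2 ≤ H)
    (ε δ T : ℝ) (hε0 : 0 < ε) (hε1 : ε ≤ 1) (hδ0 : 0 < δ) (hδ1 : δ ≤ 1) (hT : 1 ≤ T)
    (h : T * ε * δ ≤ (8 / ε) * Real.log (2 * S * A * H * T ^ 2) + 2 * ε) :
    T ≤ (2 / (ε ^ 2 * δ)) *
        (36 * Real.log (2 * S * A * H) + 16 * Real.log (17 / (ε ^ 2 * δ)) + 9 * ε ^ 2) := by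
  have hT0 : (0:ℝ) < T := lt_of_lt_of_le one_pos hT
  set c : ℝ := ε ^ 2 * δ with hcdef
  have hc0 : 0 < c := by positivity
  have hc1 : c ≤ 1 := by nlinarith
  set L : ℝ := Real.log (2 * S * A * H) with hLdef
  have hC32 : (32:ℝ) ≤ 2 * S * A * H := by
    have hS' : (4:ℝ) ≤ S := by exact_mod_cast hS
    have hA' : (2:ℝ) ≤ A := by exact_mod_cast hA
    have hH' : (2:ℝ) ≤ H := by exact_mod_cast hH
    calc (32:ℝ) = 2 * 4 * 2 * 2 := by norm_num
      _ ≤ 2 * S * A * H := by gcongr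
  have hCpos : (0:ℝ) < 2 * S * A * H := by linarith
  have hL1 : 1 ≤ L := by
    rw [hLdef, Real.le_log_iff_exp_le hCpos]
    have := Real.exp_one_lt_d9
    linarith
  -- split the log
  have hsplit : Real.log (2 * S * A * H * T ^ 2) = L + 2 * Real.log T := by
    rw [Real.log_mul (ne_of_gt hCpos) (by positivity), Real.log_pow]
    push_cast; ring
  -- multiply hypothesis by ε
  have h2 : T * c ≤ 8 * L + 16 * Real.log T + 2 * ε ^ 2 := by
    have h' := mul_le_mul_of_nonneg_right h hε0.le
    rw [hsplit] at h'
    have hkey : (8 / ε) * (L + 2 * Real.log T) * ε = 8 * L + 16 * Real.log T := by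
      field_simp; ring
    nlinarith [h', hkey]
  -- sqrt bound on log T
  have hsT1 : 1 ≤ Real.sqrt T := by
    rw [show (1:ℝ) = Real.sqrt 1 by simp]
    exact Real.sqrt_le_sqrt hT
  have hsTpos : 0 < Real.sqrt T := lt_of_lt_of_le one_pos hsT1
  have hsTsq : Real.sqrt T * Real.sqrt T = T := Real.mul_self_sqrt (by linarith)
  have hlogT : Real.log T ≤ 2 * Real.sqrt T - 2 := by
    have h1 : Real.log (Real.sqrt T) ≤ Real.sqrt T - 1 :=
      Real.log_le_sub_one_of_pos hsTpos
    have h2 : Real.log (Real.sqrt T) = Real.log T / 2 := Real.log_sqrt (by linarith)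
    linarith [h2 ▸ h1]
  -- c * sqrt T ≤ 8L + 34
  have hcsT : c * Real.sqrt T ≤ 8 * L + 34 := by
    have hTc : T * c ≤ Real.sqrt T * (8 * L + 34) := by
      nlinarith [h2, hlogT, hsT1, sq_nonneg ε, hε1, hε0.le]
    have := hTc
    rw [← hsTsq] at this
    nlinarith [hsT1, hc0]
  have h8L34pos : (0:ℝ) < 8 * L + 34 := by linarith
  -- log T bound
  have hlogTb : Real.log T ≤ 2 * (Real.log 17 + L + 1 - Real.log c) := by
    have hsTle : Real.sqrt T ≤ (8 * L + 34) / c := by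
      rw [le_div_iff₀ hc0]; linarith [hcsT]
    have hl1 : Real.log (Real.sqrt T) ≤ Real.log ((8 * L + 34) / c) :=
      Real.log_le_log hsTpos hsTle
    have hl2 : Real.log ((8 * L + 34) / c) = Real.log (8 * L + 34) - Real.log c :=
      Real.log_div (ne_of_gt h8L34pos) (ne_of_gt hc0)
    have hl3 : Real.log (8 * L + 34) ≤ Real.log (17 * (L + 2)) :=
      Real.log_le_log h8L34pos (by linarith)
    have hl4 : Real.log (17 * (L + 2)) = Real.log 17 + Real.log (L + 2) :=
      Real.log_mul (by norm_num) (by positivity)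
    have hl5 : Real.log (L + 2) ≤ L + 1 := by
      have := Real.log_le_sub_one_of_pos (show (0:ℝ) < L + 2 by linarith)
      linarith
    have h6 : Real.log (Real.sqrt T) = Real.log T / 2 := Real.log_sqrt (by linarith)
    rw [h6] at hl1
    linarith
  -- finish
  have hlog17 : (0:ℝ) ≤ Real.log 17 := Real.log_nonneg (by norm_num)
  have hlogc : Real.log c ≤ 0 := Real.log_nonpos hc0.le hc1
  have h17c : Real.log (17 / c) = Real.log 17 - Real.log c :=
    Real.log_div (by norm_num) (ne_of_gt hc0)
  rw [h17c, div_mul_eq_mul_div, le_div_iff₀ hc0]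
  nlinarith [h2, hlogTb, hL1, sq_nonneg ε, hε0.le]
end

section
/- In an MDP with deterministic transitions, the worst conditional value loss of any policy is attained at the initial state and stage: for every policy π ∈ Π, the maximum over ℓ ∈ {1,...,H} and s' ∈ S with p^π_ℓ(s') > 0 of (V*_ℓ(s') − V^π_ℓ(s')) equals V*_1(s1) − V^π_1(s1). -/
/-- In an MDP with deterministic transitions, the worst conditional value loss of any policy
is attained at the initial state and stage. -/
theorem condRetGap_eq_initial_of_deterministic {S A : Type} [Fintype S] [Nonempty S]
    [Fintype A] [Nonempty A] [DecidableEq S] [DecidableEq A] (M : MDP S A)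
    (hdet : ∀ h s a, 1 ≤ h → h ≤ M.H → ∃ s' : S, M.p h s a s' = 1)
    (π : ℕ → S → A) :
    M.condRetGap π = M.optVal 1 M.s1 - M.polVal π 1 M.s1 := by
  classical
  -- deterministic next-state function
  set f : ℕ → S → A → S := fun h s a =>
    if hh : 1 ≤ h ∧ h ≤ M.H then (hdet h s a hh.1 hh.2).choose else Classical.arbitrary S
    with hf
  have hp_ind : ∀ h s a, 1 ≤ h → h ≤ M.H → ∀ s',
      M.p h s a s' = if s' = f h s a then 1 else 0 := by
    intro h s a h1 h2 s'
    have hone : M.p h s a (f h s a) = 1 := by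
      simp only [hf, dif_pos (And.intro h1 h2)]
      exact (hdet h s a h1 h2).choose_spec
    have hsum := M.p_sum_one h s a h1 h2
    by_cases hcase : s' = f h s a
    · simp [hcase, hone]
    · simp only [hcase, if_false]
      have hrest : ∑ s'' ∈ Finset.univ.erase (f h s a), M.p h s a s'' = 0 := by
        have h2' := Finset.add_sum_erase Finset.univ (M.p h s a) (Finset.mem_univ (f h s a))
        rw [hsum] at h2'
        linarith
      refine (Finset.sum_eq_zero_iff_of_nonneg ?_).mp hrest s' ?_
      · intro x _; exact M.p_nonneg h s a x h1 h2
      · simp [hcase]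
  -- deterministic sum lemma
  have hsumdet : ∀ h s a, 1 ≤ h → h ≤ M.H → ∀ g : S → ℝ,
      ∑ s' : S, M.p h s a s' * g s' = g (f h s a) := by
    intro h s a h1 h2 g
    have : ∀ s' : S, M.p h s a s' * g s' = (if s' = f h s a then g s' else 0) := by
      intro s'; rw [hp_ind h s a h1 h2 s']; by_cases hc : s' = f h s a <;> simp [hc]
    rw [Finset.sum_congr rfl (fun s' _ => this s')]
    simp
  -- trajectory: τ k is the state at stage k+1
  set τ : ℕ → S := fun n => Nat.rec M.s1 (fun k s => f (k+1) s (π (k+1) s)) n with hτ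
  have hτ0 : τ 0 = M.s1 := rfl
  have hτsucc : ∀ k, τ (k+1) = f (k+1) (τ k) (π (k+1) (τ k)) := fun k => rfl
  -- value recursions
  have hpolVal : ∀ h, 1 ≤ h → h ≤ M.H → ∀ s,
      M.polVal π h s = M.r h s (π h s) + ∑ s' : S, M.p h s (π h s) s' * M.polVal π (h+1) s' := by
    intro h h1 h2 s
    have e1 : M.H + 1 - h = (M.H - h) + 1 := by omega
    have e2 : M.H - (M.H - h) = h := by omega
    have e3 : M.H + 1 - (h+1) = M.H - h := by omega
    rw [MDP.polVal, e1]
    simp only [MDP.polValAux, e2]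
    congr 1
    refine Finset.sum_congr rfl (fun s' _ => ?_)
    rw [MDP.polVal, e3]
  have hoptVal : ∀ h, 1 ≤ h → h ≤ M.H → ∀ s,
      M.optVal h s = ⨆ a : A, (M.r h s a + ∑ s' : S, M.p h s a s' * M.optVal (h+1) s') := by
    intro h h1 h2 s
    have e1 : M.H + 1 - h = (M.H - h) + 1 := by omega
    have e2 : M.H - (M.H - h) = h := by omega
    have e3 : M.H + 1 - (h+1) = M.H - h := by omega
    rw [MDP.optVal, e1]
    simp only [MDP.optValAux, e2]
    congr 1; funext a
    congr 1
    refine Finset.sum_congr rfl (fun s' _ => ?_)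
    rw [MDP.optVal, e3]
  -- gap monotonicity step
  set G : ℕ → ℝ := fun h => M.optVal h (τ (h-1)) - M.polVal π h (τ (h-1)) with hG
  have hstep : ∀ k, k + 1 ≤ M.H → G (k+2) ≤ G (k+1) := by
    intro k hk
    have h1 : 1 ≤ k + 1 := by omega
    set a := π (k+1) (τ k) with ha
    have hpol : M.polVal π (k+1) (τ k)
        = M.r (k+1) (τ k) a + M.polVal π (k+2) (τ (k+1)) := by
      rw [hpolVal (k+1) h1 hk (τ k), hsumdet (k+1) (τ k) a h1 hk, hτsucc k]
    have hopt : M.r (k+1) (τ k) a + M.optVal (k+2) (τ (k+1)) ≤ M.optVal (k+1) (τ k) := by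
      rw [hoptVal (k+1) h1 hk (τ k)]
      have := hsumdet (k+1) (τ k) a h1 hk (M.optVal (k+2))
      calc M.r (k+1) (τ k) a + M.optVal (k+2) (τ (k+1))
          = M.r (k+1) (τ k) a + ∑ s' : S, M.p (k+1) (τ k) a s' * M.optVal (k+2) s' := by
            rw [this, hτsucc k]
        _ ≤ _ := le_ciSup (f := fun a => M.r (k+1) (τ k) a
              + ∑ s' : S, M.p (k+1) (τ k) a s' * M.optVal (k+1+1) s')
            (Set.Finite.bddAbove (Set.finite_range _)) a
    have e1 : k + 2 - 1 = k + 1 := by omega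
    have e2 : k + 1 - 1 = k := by omega
    simp only [hG, e1, e2]
    linarith
  -- gap is maximized at stage 1
  have hle1 : ∀ k, k + 1 ≤ M.H → G (k+1) ≤ G 1 := by
    intro k
    induction k with
    | zero => intro _; exact le_refl _
    | succ m ih =>
      intro hk
      exact le_trans (hstep m (by omega)) (ih (by omega))
  -- visitation is the trajectory indicator
  have hvisit : ∀ k, k + 1 ≤ M.H → ∀ s,
      M.visit π (k+1) s = if s = τ k then 1 else 0 := by
    intro k
    induction k with
    | zero => intro _ s; simp [MDP.visit, hτ0]
    | succ m ih =>
        intro hk s'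
        have h1 : 1 ≤ m + 1 := by omega
        have h2 : m + 1 ≤ M.H := by omega
        show M.visit π (m+2) s' = _
        have : M.visit π (m + 2) s'
            = ∑ s : S, M.visit π (m+1) s * M.p (m+1) s (π (m+1) s) s' := rfl
        rw [this]
        have hred : ∀ s : S, M.visit π (m+1) s * M.p (m+1) s (π (m+1) s) s'
            = if s = τ m then M.p (m+1) s (π (m+1) s) s' else 0 := by
          intro s
          rw [ih h2 s]
          by_cases hc : s = τ m <;> simp [hc]
        rw [Finset.sum_congr rfl (fun s _ => hred s)]
        rw [Finset.sum_ite_eq' Finset.univ (τ m)]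
        simp only [Finset.mem_univ, if_true]
        rw [hp_ind (m+1) (τ m) _ h1 h2 s', ← hτsucc m]
  -- conclude
  have hτ0' : τ (1 - 1) = M.s1 := hτ0
  have hG1 : G 1 = M.optVal 1 M.s1 - M.polVal π 1 M.s1 := by
    simp only [hG, hτ0']
  have hub : ∀ x ∈ {x : ℝ | ∃ ℓ, 1 ≤ ℓ ∧ ℓ ≤ M.H ∧ ∃ s' : S,
      M.visit π ℓ s' > 0 ∧ x = M.optVal ℓ s' - M.polVal π ℓ s'}, x ≤ G 1 := by
    rintro x ⟨ℓ, h1, h2, s', hpos, rfl⟩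
    obtain ⟨k, rfl⟩ : ∃ k, ℓ = k + 1 := ⟨ℓ - 1, by omega⟩
    rw [hvisit k (by omega) s'] at hpos
    by_cases hc : s' = τ k
    · subst hc
      exact hle1 k (by omega)
    · simp [hc] at hpos
  have hmem : (M.optVal 1 M.s1 - M.polVal π 1 M.s1) ∈ {x : ℝ | ∃ ℓ, 1 ≤ ℓ ∧ ℓ ≤ M.H ∧ ∃ s' : S,
      M.visit π ℓ s' > 0 ∧ x = M.optVal ℓ s' - M.polVal π ℓ s'} := by
    refine ⟨1, le_refl 1, M.H_pos, M.s1, ?_, rfl⟩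
    simp [MDP.visit]
  rw [MDP.condRetGap]
  refine le_antisymm ?_ ?_
  · refine csSup_le ⟨_, hmem⟩ ?_
    intro x hx
    rw [← hG1]
    exact hub x hx
  · refine le_csSup ⟨G 1, hub⟩ hmem
end
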